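/- Let X and Z be measurable spaces, κ : X → Z and η : Z → X Markov kernels (encoder and decoder), P_X a probability measure on X, and π = P_X.bind κ the learned latent distribution. Assume (i) π.bind η = P_X, and (ii) the decode–encode transition kernel T = κ ∘ η satisfies a Doeblin minorization condition: there exist ε ∈ (0, 1] and a probability measure ρ on Z with T(z)(A) ≥ ε · ρ(A) for all z and measurable A. Then for every probability measure μ₀ on Z (in particular for the prior P(Z)), the laws μ₀.bind Tⁿ of the Markov chain converge in total variation to π as n → ∞; i.e. the MCMC sampling process of iteratively decoding and encoding converges to the learned latent distribution from any initial distribution. -/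

import Mathlib

open MeasureTheory ProbabilityTheory Filter
open scoped ENNReal Topology

/-- Total variation distance between two measures:
`‖μ − ν‖_TV = sup { |μ(A) − ν(A)| : A measurable }`. -/
noncomputable def tvDist {Z : Type*} [MeasurableSpace Z] (μ ν : Measure Z) : ℝ≥0∞ :=
  ⨆ (A : Set Z) (_ : MeasurableSet A), max (μ A - ν A) (ν A - μ A)

/-- The `n`-fold self-composition of a kernel. -/
noncomputable def kernelIter {Z : Type*} [MeasurableSpace Z]
    (T : Kernel Z Z) : ℕ → Kernel Z Z
  | 0 => Kernel.id
  | n + 1 => T ∘ₖ kernelIter T n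

section Aux

variable {Z : Type*} [MeasurableSpace Z]

instance kernelIter_isMarkov (T : Kernel Z Z) [IsMarkovKernel T] (n : ℕ) :
    IsMarkovKernel (kernelIter T n) := by
  induction n with
  | zero => rw [kernelIter]; infer_instance
  | succ n ih => rw [kernelIter]; infer_instance

lemma bind_comp_eq {α β γ : Type*} [MeasurableSpace α] [MeasurableSpace β] [MeasurableSpace γ]
    (μ : Measure α) (k₁ : Kernel α β) (k₂ : Kernel β γ) :
    μ.bind (k₂ ∘ₖ k₁) = (μ.bind k₁).bind k₂ := by
  rw [Measure.bind_bind k₁.measurable.aemeasurable k₂.measurable.aemeasurable]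
  exact congrArg _ (funext fun a => Kernel.comp_apply k₂ k₁ a)

lemma kernelIter_succ_eq (T : Kernel Z Z) [IsMarkovKernel T] (n : ℕ) :
    kernelIter T (n + 1) = kernelIter T n ∘ₖ T := by
  induction n with
  | zero => rw [kernelIter, kernelIter, kernelIter, Kernel.comp_id, Kernel.id_comp]
  | succ n ih =>
    calc kernelIter T (n + 2) = T ∘ₖ kernelIter T (n + 1) := rfl
      _ = T ∘ₖ (kernelIter T n ∘ₖ T) := by rw [ih]
      _ = (T ∘ₖ kernelIter T n) ∘ₖ T := (Kernel.comp_assoc T (kernelIter T n) T).symm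
      _ = kernelIter T (n + 1) ∘ₖ T := rfl

lemma bind_kernelIter_succ (μ : Measure Z) (T : Kernel Z Z) [IsMarkovKernel T] (n : ℕ) :
    μ.bind (kernelIter T (n + 1)) = (μ.bind T).bind (kernelIter T n) := by
  rw [kernelIter_succ_eq, bind_comp_eq]

lemma bind_kernel_isProb {α β : Type*} [MeasurableSpace α] [MeasurableSpace β]
    (μ : Measure α) [IsProbabilityMeasure μ]
    (T : Kernel α β) [IsMarkovKernel T] : IsProbabilityMeasure (μ.bind T) := by
  constructor
  rw [Measure.bind_apply MeasurableSet.univ T.measurable.aemeasurable]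
  simp [measure_univ]

lemma bind_kernelIter_id (μ : Measure Z) (T : Kernel Z Z) : μ.bind (kernelIter T 0) = μ := by
  rw [kernelIter]
  have : ⇑(Kernel.id : Kernel Z Z) = Measure.dirac := funext fun a => Kernel.id_apply a
  rw [show ((Kernel.id : Kernel Z Z) : Z → Measure Z) = Measure.dirac from this,
    Measure.bind_dirac]

/-- Key geometric contraction: under a Doeblin minorization with `ε < 1`,
the laws of two chains after `n` steps differ by at most `(1-ε)^n` on each set. -/
lemma doeblin_key (T : Kernel Z Z) [IsMarkovKernel T]
    (ε : ℝ≥0∞) (hε0 : 0 < ε) (hεlt : ε < 1)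
    (ρ : Measure Z) [IsProbabilityMeasure ρ]
    (hd : ∀ z (A : Set Z), MeasurableSet A → ε * ρ A ≤ T z A) :
    ∀ n : ℕ, ∀ (μ ν : Measure Z), IsProbabilityMeasure μ → IsProbabilityMeasure ν →
      ∀ (A : Set Z), MeasurableSet A →
        μ.bind (kernelIter T n) A - ν.bind (kernelIter T n) A ≤ (1 - ε) ^ n := by
  have hε_ne_top : ε ≠ ∞ := (lt_of_lt_of_le hεlt le_top).ne
  have h1ε_ne_zero : (1 : ℝ≥0∞) - ε ≠ 0 := by
    simp only [ne_eq, tsub_eq_zero_iff_le, not_le]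
    exact hεlt
  have h1ε_ne_top : (1 : ℝ≥0∞) - ε ≠ ∞ := (tsub_le_self.trans_lt ENNReal.one_lt_top).ne
  -- one-step minorization at the level of measures
  have hle : ∀ (μ : Measure Z), IsProbabilityMeasure μ → ε • ρ ≤ μ.bind T := by
    intro μ hμ
    refine Measure.le_iff.2 fun A hA => ?_
    rw [Measure.bind_apply hA T.measurable.aemeasurable, Measure.smul_apply, smul_eq_mul]
    calc ε * ρ A = ∫⁻ _, ε * ρ A ∂μ := by simp [measure_univ]
    _ ≤ ∫⁻ z, T z A ∂μ := lintegral_mono fun z => hd z A hA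
  intro n
  induction n with
  | zero =>
    intro μ ν hμ hν A hA
    rw [bind_kernelIter_id, bind_kernelIter_id, pow_zero]
    exact tsub_le_self.trans prob_le_one
  | succ n ih =>
    intro μ ν hμ hν A hA
    -- decompose `m.bind T = ε • ρ + (1-ε) • m'` with `m'` a probability measure
    have decomp : ∀ (m : Measure Z), IsProbabilityMeasure m →
        ∃ m' : Measure Z, IsProbabilityMeasure m' ∧
          m.bind T = ε • ρ + (1 - ε) • m' := by
      intro m hm
      haveI : IsProbabilityMeasure (m.bind T) := bind_kernel_isProb m T
      haveI : IsFiniteMeasure (ε • ρ) := by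
        constructor
        rw [Measure.smul_apply, smul_eq_mul]
        exact ENNReal.mul_lt_top hε_ne_top.lt_top (measure_lt_top ρ _)
      have hle' : ε • ρ ≤ m.bind T := hle m hm
      refine ⟨(1 - ε)⁻¹ • (m.bind T - ε • ρ), ?_, ?_⟩
      · constructor
        rw [Measure.smul_apply, Measure.sub_apply MeasurableSet.univ hle', smul_eq_mul]
        simp only [Measure.smul_apply, smul_eq_mul, measure_univ, mul_one]
        rw [ENNReal.inv_mul_cancel h1ε_ne_zero h1ε_ne_top]
      · rw [smul_smul, ENNReal.mul_inv_cancel h1ε_ne_zero h1ε_ne_top, one_smul,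
          add_comm, Measure.sub_add_cancel_of_le hle']
    obtain ⟨μ', hμ', hμeq⟩ := decomp μ hμ
    obtain ⟨ν', hν', hνeq⟩ := decomp ν hν
    have expand : ∀ (m m' : Measure Z), m.bind T = ε • ρ + (1 - ε) • m' →
        m.bind (kernelIter T (n + 1)) A
          = ε * (ρ.bind (kernelIter T n)) A + (1 - ε) * (m'.bind (kernelIter T n)) A := by
      intro m m' heq
      rw [bind_kernelIter_succ, heq,
        Measure.bind_apply hA (kernelIter T n).measurable.aemeasurable,
        lintegral_add_measure, lintegral_smul_measure, lintegral_smul_measure,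
        Measure.bind_apply hA (kernelIter T n).measurable.aemeasurable,
        Measure.bind_apply hA (kernelIter T n).measurable.aemeasurable, smul_eq_mul, smul_eq_mul]
    rw [expand μ μ' hμeq, expand ν ν' hνeq]
    rw [tsub_le_iff_right]
    have hIH : (μ'.bind (kernelIter T n)) A ≤ (1 - ε) ^ n + (ν'.bind (kernelIter T n)) A :=
      tsub_le_iff_right.1 (ih μ' ν' hμ' hν' A hA)
    calc ε * (ρ.bind (kernelIter T n)) A + (1 - ε) * (μ'.bind (kernelIter T n)) A
        ≤ ε * (ρ.bind (kernelIter T n)) A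
            + (1 - ε) * ((1 - ε) ^ n + (ν'.bind (kernelIter T n)) A) :=
          add_le_add_right (mul_le_mul_right hIH _) _
      _ = (1 - ε) ^ (n + 1)
            + (ε * (ρ.bind (kernelIter T n)) A + (1 - ε) * (ν'.bind (kernelIter T n)) A) := by
          rw [mul_add, pow_succ]
          ring

end Aux

/-- Theorem 1 combined with Lemmas 2 and 3: if the decoder inverts the encoder
in distribution and the decode–encode transition kernel `T = κ ∘ₖ η` satisfies
a Doeblin minorization condition, then from any initial distribution `μ₀`
(in particular the prior) the laws `μ₀ Tⁿ` of the MCMC chain converge in total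
variation to the learned latent distribution `π = P_X.bind κ`. -/
theorem mcmc_converges_to_learned_latent
    {X Z : Type*} [MeasurableSpace X] [MeasurableSpace Z]
    (κ : Kernel X Z) (η : Kernel Z X) [IsMarkovKernel κ] [IsMarkovKernel η]
    (P_X : Measure X) [IsProbabilityMeasure P_X]
    (π : Measure Z) (hπ : π = P_X.bind κ)
    (hinv : π.bind η = P_X)
    (ε : ℝ≥0∞) (hε0 : 0 < ε) (hε1 : ε ≤ 1)
    (ρ : Measure Z) [IsProbabilityMeasure ρ]
    (hdoeblin : ∀ z (A : Set Z), MeasurableSet A → ε * ρ A ≤ (κ ∘ₖ η) z A) :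
    ∀ (μ₀ : Measure Z), IsProbabilityMeasure μ₀ →
      Tendsto (fun n : ℕ => tvDist (μ₀.bind (kernelIter (κ ∘ₖ η) n)) π) atTop (𝓝 0) := by
  haveI : IsProbabilityMeasure π := by rw [hπ]; exact bind_kernel_isProb P_X κ
  set T : Kernel Z Z := κ ∘ₖ η with hT
  have hstat1 : π.bind T = π := by
    rw [hT, bind_comp_eq π η κ, hinv, ← hπ]
  have hstat : ∀ n, π.bind (kernelIter T n) = π := by
    intro n
    induction n with
    | zero => exact bind_kernelIter_id π T
    | succ n ih => rw [bind_kernelIter_succ, hstat1, ih]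
  set ε' : ℝ≥0∞ := ε / 2 with hε'
  have hε'0 : 0 < ε' := ENNReal.div_pos hε0.ne' (by norm_num)
  have hε'lt : ε' < 1 := lt_of_le_of_lt (by
      calc ε' ≤ 1 / 2 := ENNReal.div_le_div_right hε1 2
      _ = 2⁻¹ := one_div 2) (by norm_num)
  have hd' : ∀ z (A : Set Z), MeasurableSet A → ε' * ρ A ≤ T z A := by
    intro z A hA
    exact le_trans (mul_le_mul_left (ENNReal.half_le_self) _) (hdoeblin z A hA)
  intro μ₀ hμ₀
  have key := doeblin_key T ε' hε'0 hε'lt ρ hd'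
  have hbound : ∀ n, tvDist (μ₀.bind (kernelIter T n)) π ≤ (1 - ε') ^ n := by
    intro n
    refine iSup₂_le fun A hA => max_le ?_ ?_
    · calc μ₀.bind (kernelIter T n) A - π A
          = μ₀.bind (kernelIter T n) A - (π.bind (kernelIter T n)) A := by rw [hstat]
        _ ≤ (1 - ε') ^ n := key n μ₀ π hμ₀ inferInstance A hA
    · calc π A - μ₀.bind (kernelIter T n) A
          = (π.bind (kernelIter T n)) A - μ₀.bind (kernelIter T n) A := by rw [hstat]
        _ ≤ (1 - ε') ^ n := key n π μ₀ inferInstance hμ₀ A hA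
  have hpow : Tendsto (fun n : ℕ => ((1 : ℝ≥0∞) - ε') ^ n) atTop (𝓝 0) :=
    ENNReal.tendsto_pow_atTop_nhds_zero_of_lt_one
      (ENNReal.sub_lt_self ENNReal.one_ne_top one_ne_zero hε'0.ne')
  exact tendsto_of_tendsto_of_tendsto_of_le_of_le tendsto_const_nhds hpow
    (fun n => zero_le) hbound
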